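/- The Robbins–Siegmund test for the Gamma shape parameter has power one: for every θ > 0 with θ ≠ θ₀ and every b > 0, if X₁, X₂, … are i.i.d. Gamma(θ,1) then P_θ(τ_b < ∞) = 1 (indeed Λ_n → ∞ almost surely under P_θ). -/

import Mathlib

open MeasureTheory ProbabilityTheory Filter
open scoped ENNReal NNReal

noncomputable section

namespace RS

open Set

lemma ae_ne_zero : ∀ᵐ x : ℝ ∂MeasureTheory.volume, x ≠ 0 := by
  rw [ae_iff]
  simp only [not_not, Set.setOf_eq_eq_singleton]
  exact Real.volume_singleton

lemma pdf_eq_Ioi {a : ℝ} (x : ℝ) (hx : 0 < x) :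
    gammaPDFReal a 1 x = (Real.Gamma a)⁻¹ * (Real.exp (-x) * x ^ (a - 1)) := by
  simp only [gammaPDFReal, if_pos hx.le, Real.one_rpow, one_mul]
  ring

lemma gammaMeasure_Iic_zero {θ : ℝ} : gammaMeasure θ 1 (Iic 0) = 0 := by
  rw [show gammaMeasure θ 1 = MeasureTheory.volume.withDensity (gammaPDF θ 1) from rfl,
    withDensity_apply _ measurableSet_Iic]
  have h : ∀ᵐ x ∂(MeasureTheory.volume.restrict (Iic (0:ℝ))), gammaPDF θ 1 x = 0 := by
    filter_upwards [ae_restrict_mem measurableSet_Iic, ae_restrict_of_ae ae_ne_zero] with x h1 h2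
    exact gammaPDF_of_neg (lt_of_le_of_ne h1 h2)
  rw [lintegral_congr_ae h, lintegral_zero]

lemma integrable_gamma_iff {θ : ℝ} (hθ : 0 < θ) (f : ℝ → ℝ) :
    Integrable f (gammaMeasure θ 1) ↔
      Integrable (fun x => f x * gammaPDFReal θ 1 x) MeasureTheory.volume := by
  rw [show gammaMeasure θ 1 = MeasureTheory.volume.withDensity (gammaPDF θ 1) from rfl,
    show gammaPDF θ 1 = fun x => ENNReal.ofReal (gammaPDFReal θ 1 x) from rfl,
    integrable_withDensity_iff ((measurable_gammaPDFReal θ 1).ennreal_ofReal)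
      (Filter.Eventually.of_forall fun x => ENNReal.ofReal_lt_top)]
  simp_rw [ENNReal.toReal_ofReal (gammaPDFReal_nonneg hθ one_pos _)]

lemma integral_gamma {θ : ℝ} (hθ : 0 < θ) (f : ℝ → ℝ) :
    ∫ x, f x ∂(gammaMeasure θ 1) = ∫ x, gammaPDFReal θ 1 x * f x := by
  rw [show gammaMeasure θ 1 = MeasureTheory.volume.withDensity (gammaPDF θ 1) from rfl,
    show gammaPDF θ 1 = fun x => ((Real.toNNReal (gammaPDFReal θ 1 x) : ℝ≥0) : ℝ≥0∞) from rfl,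
    integral_withDensity_eq_integral_smul ((measurable_gammaPDFReal θ 1).real_toNNReal) f]
  congr 1
  ext x
  rw [NNReal.smul_def, Real.coe_toNNReal _ (gammaPDFReal_nonneg hθ one_pos x), smul_eq_mul]

lemma integrable_mul_pdf {θ : ℝ} (hθ : 0 < θ) {f g : ℝ → ℝ} (hf : Measurable f)
    (hg : IntegrableOn g (Ioi 0) MeasureTheory.volume)
    (hbound : ∀ x ∈ Ioi (0:ℝ), ‖f x * gammaPDFReal θ 1 x‖ ≤ g x) :
    Integrable (fun x => f x * gammaPDFReal θ 1 x) MeasureTheory.volume := by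
  have hmeas : Measurable fun x => f x * gammaPDFReal θ 1 x :=
    hf.mul (measurable_gammaPDFReal θ 1)
  have hIoi : IntegrableOn (fun x => f x * gammaPDFReal θ 1 x) (Ioi 0) MeasureTheory.volume := by
    apply Integrable.mono hg hmeas.aestronglyMeasurable.restrict
    rw [ae_restrict_iff' measurableSet_Ioi]
    exact Filter.Eventually.of_forall fun x hx => (hbound x hx).trans (le_abs_self _)
  apply hIoi.integrable_of_ae_notMem_eq_zero
  filter_upwards [ae_ne_zero] with x hx hxout
  have hxle : x < 0 := lt_of_le_of_ne (by simpa [Set.mem_Ioi, not_lt] using hxout) hx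
  simp [gammaPDFReal, not_le.2 hxle]

lemma integral_mul_pdf_eq {θ : ℝ} (f : ℝ → ℝ) :
    ∫ x, gammaPDFReal θ 1 x * f x =
      ∫ x in Ioi 0, (Real.Gamma θ)⁻¹ * (Real.exp (-x) * x ^ (θ-1)) * f x := by
  rw [← setIntegral_eq_integral_of_ae_compl_eq_zero (s := Ioi (0:ℝ))
    (by filter_upwards [ae_ne_zero] with x hx hxout
        have hxle : x < 0 := lt_of_le_of_ne (by simpa [Set.mem_Ioi, not_lt] using hxout) hx
        simp [gammaPDFReal, not_le.2 hxle])]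
  exact setIntegral_congr_fun measurableSet_Ioi fun x hx => by rw [pdf_eq_Ioi x hx]

lemma integrable_id_gamma {θ : ℝ} (hθ : 0 < θ) :
    Integrable (fun x : ℝ => x) (gammaMeasure θ 1) := by
  rw [integrable_gamma_iff hθ]
  apply integrable_mul_pdf hθ (measurable_id' : Measurable fun x : ℝ => x)
    (((Real.GammaIntegral_convergent (by linarith : (0:ℝ) < θ + 1)).const_mul
      (Real.Gamma θ)⁻¹))
  intro x hx
  rw [Set.mem_Ioi] at hx
  have hpdf := gammaPDFReal_nonneg hθ one_pos x
  rw [Real.norm_eq_abs, abs_mul, abs_of_pos hx, abs_of_nonneg hpdf, pdf_eq_Ioi x hx]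
  have h2 : x ^ (θ + 1 - 1) = x ^ (θ - 1) * x := by
    rw [show θ + 1 - 1 = (θ - 1) + 1 by ring, Real.rpow_add_one hx.ne']
  rw [h2]; ring_nf; exact le_refl _

lemma integral_id_gamma {θ : ℝ} (hθ : 0 < θ) :
    ∫ x, x ∂(gammaMeasure θ 1) = θ := by
  rw [integral_gamma hθ, integral_mul_pdf_eq]
  have hcong : ∀ x ∈ Ioi (0:ℝ),
      (Real.Gamma θ)⁻¹ * (Real.exp (-x) * x ^ (θ-1)) * x
        = (Real.Gamma θ)⁻¹ * (Real.exp (-x) * x ^ (θ + 1 - 1)) := by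
    intro x hx
    rw [Set.mem_Ioi] at hx
    rw [show θ + 1 - 1 = (θ - 1) + 1 by ring, Real.rpow_add_one hx.ne']
    ring
  rw [setIntegral_congr_fun measurableSet_Ioi hcong, integral_const_mul,
    ← Real.Gamma_eq_integral (by linarith : (0:ℝ) < θ + 1), Real.Gamma_add_one hθ.ne']
  field_simp [Real.Gamma_pos_of_pos hθ |>.ne']

lemma abs_log_le {θ x : ℝ} (hθ : 0 < θ) (hx : 0 < x) :
    |Real.log x| ≤ 2/θ * x ^ (-(θ/2)) + x := by
  have hrp : (0:ℝ) < 2/θ * x ^ (-(θ/2)) := by positivity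
  rcases le_or_gt 1 x with h1 | h1
  · rw [abs_of_nonneg (Real.log_nonneg h1)]
    have := Real.log_le_sub_one_of_pos hx
    linarith
  · rw [abs_of_nonpos (Real.log_nonpos hx.le h1.le)]
    have hy : (0:ℝ) < x⁻¹ := by positivity
    have key : Real.log x⁻¹ ≤ 2/θ * (x⁻¹) ^ (θ/2) := by
      have h3 : Real.log ((x⁻¹) ^ (θ/2)) ≤ (x⁻¹) ^ (θ/2) := by
        have := Real.log_le_sub_one_of_pos (Real.rpow_pos_of_pos hy (θ/2))
        linarith
      rw [Real.log_rpow hy] at h3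
      have hθ2 : (0:ℝ) < θ/2 := by linarith
      calc Real.log x⁻¹ = (2/θ) * (θ/2 * Real.log x⁻¹) := by field_simp
        _ ≤ 2/θ * (x⁻¹) ^ (θ/2) := by
            apply mul_le_mul_of_nonneg_left h3 (by positivity)
    rw [Real.log_inv] at key
    have hinv : (x⁻¹) ^ (θ/2) = x ^ (-(θ/2)) := by
      rw [Real.rpow_neg hx.le, Real.inv_rpow hx.le]
    rw [hinv] at key
    linarith

lemma integrable_abs_log_gamma {θ : ℝ} (hθ : 0 < θ) :
    Integrable (fun x : ℝ => |Real.log x|) (gammaMeasure θ 1) := by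
  rw [integrable_gamma_iff hθ]
  set g : ℝ → ℝ := fun x => (Real.Gamma θ)⁻¹ *
    (2/θ * (Real.exp (-x) * x ^ (θ/2 - 1)) + Real.exp (-x) * x ^ (θ + 1 - 1)) with hg
  have hgint : IntegrableOn g (Ioi 0) MeasureTheory.volume := by
    apply Integrable.const_mul
    exact ((Real.GammaIntegral_convergent (by linarith : (0:ℝ) < θ/2)).const_mul
      (2/θ)).add (Real.GammaIntegral_convergent (by linarith : (0:ℝ) < θ + 1))
  apply integrable_mul_pdf hθ (Real.measurable_log.abs) hgint
  intro x hx
  rw [Set.mem_Ioi] at hx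
  have hpdf := gammaPDFReal_nonneg hθ one_pos x
  rw [Real.norm_eq_abs, abs_mul, abs_abs, abs_of_nonneg hpdf, pdf_eq_Ioi x hx]
  have key := abs_log_le hθ hx
  have h1 : x ^ (-(θ/2)) * x ^ (θ - 1) = x ^ (θ/2 - 1) := by
    rw [← Real.rpow_add hx]; ring_nf
  have h2 : x ^ (θ + 1 - 1) = x ^ (θ - 1) * x := by
    rw [show θ + 1 - 1 = (θ - 1) + 1 by ring, Real.rpow_add_one hx.ne']
  have hpdfpos : (0:ℝ) ≤ (Real.Gamma θ)⁻¹ * (Real.exp (-x) * x ^ (θ - 1)) := by positivity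
  calc |Real.log x| * ((Real.Gamma θ)⁻¹ * (Real.exp (-x) * x ^ (θ - 1)))
      ≤ (2/θ * x ^ (-(θ/2)) + x) * ((Real.Gamma θ)⁻¹ * (Real.exp (-x) * x ^ (θ - 1))) :=
        mul_le_mul_of_nonneg_right key hpdfpos
    _ = g x := by rw [hg]; simp only; rw [← h1, h2]; ring

lemma integrable_log_gamma {θ : ℝ} (hθ : 0 < θ) :
    Integrable Real.log (gammaMeasure θ 1) := by
  apply Integrable.mono (integrable_abs_log_gamma hθ)
    Real.measurable_log.aestronglyMeasurable
  exact Filter.Eventually.of_forall fun x => by simp [Real.norm_eq_abs, abs_abs, le_refl]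

lemma gamma_pdf_integrable {a : ℝ} (ha : 0 < a) :
    Integrable (gammaPDFReal a 1) MeasureTheory.volume := by
  have h := integrable_mul_pdf ha (f := fun _ => (1:ℝ))
    (g := fun x => (Real.Gamma a)⁻¹ * (Real.exp (-x) * x ^ (a-1))) measurable_const
    ((Real.GammaIntegral_convergent ha).const_mul _) ?_
  · simpa using h
  · intro x hx
    rw [Set.mem_Ioi] at hx
    rw [one_mul, Real.norm_eq_abs, abs_of_nonneg (gammaPDFReal_nonneg ha one_pos x),
      pdf_eq_Ioi x hx]

lemma integral_gamma_pdf_one {a : ℝ} (ha : 0 < a) :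
    ∫ x, gammaPDFReal a 1 x = 1 := by
  have h : ∫ x, gammaPDFReal a 1 x * 1 = 1 := by
    rw [integral_mul_pdf_eq]
    simp_rw [mul_one]
    rw [integral_const_mul, ← Real.Gamma_eq_integral ha]
    field_simp [(Real.Gamma_pos_of_pos ha).ne']
  simpa using h

lemma K_pos {θ θ₀ : ℝ} (hθ : 0 < θ) (hθ₀ : 0 < θ₀) (hne : θ ≠ θ₀) :
    0 < (θ - θ₀) * (∫ x, Real.log x ∂(gammaMeasure θ 1))
        - (Real.log (Real.Gamma θ) - Real.log (Real.Gamma θ₀)) := by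
  set μ := gammaMeasure θ 1 with hμ
  have hprob : IsProbabilityMeasure μ := isProbabilityMeasure_gammaMeasure hθ one_pos
  set m := ∫ x, Real.log x ∂μ with hm
  set c := Real.log (Real.Gamma θ) - Real.log (Real.Gamma θ₀) with hc
  set g : ℝ → ℝ := fun x => gammaPDFReal θ₀ 1 x / gammaPDFReal θ 1 x with hgdef
  have hΓθ := (Real.Gamma_pos_of_pos hθ)
  have hΓθ₀ := (Real.Gamma_pos_of_pos hθ₀)
  have haepos : ∀ᵐ x ∂μ, 0 < x := by
    rw [ae_iff]
    have hs : {x : ℝ | ¬ 0 < x} = Iic 0 := by ext x; simp [not_lt]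
    rw [hs, hμ]; exact gammaMeasure_Iic_zero
  have hgx : ∀ x : ℝ, 0 < x → g x = x ^ (θ₀ - θ) * (Real.Gamma θ / Real.Gamma θ₀) := by
    intro x hx
    rw [hgdef]
    simp only
    have hr : x ^ (θ₀ - θ) = x ^ (θ₀ - 1) / x ^ (θ - 1) := by
      rw [show θ₀ - θ = (θ₀ - 1) - (θ - 1) by ring, Real.rpow_sub hx]
    rw [pdf_eq_Ioi x hx, pdf_eq_Ioi x hx, hr]
    have h3 := (Real.exp_pos (-x)).ne'
    have h4 := (Real.rpow_pos_of_pos hx (θ-1)).ne'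
    field_simp
  have hgpos : ∀ x : ℝ, 0 < x → 0 < g x := by
    intro x hx
    rw [hgx x hx]
    positivity
  have hprod : (fun x => g x * gammaPDFReal θ 1 x) =ᵐ[MeasureTheory.volume]
      gammaPDFReal θ₀ 1 := by
    filter_upwards [ae_ne_zero] with x hx
    rcases lt_or_gt_of_ne hx with h | h
    · simp [hgdef, gammaPDFReal, not_le.2 h]
    · have hpos := gammaPDFReal_pos hθ one_pos h
      rw [hgdef]
      field_simp
  have hg_int : Integrable g μ := by
    rw [hμ, integrable_gamma_iff hθ]
    exact (gamma_pdf_integrable hθ₀).congr hprod.symm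
  have hg_integral : ∫ x, g x ∂μ = 1 := by
    rw [hμ, integral_gamma hθ]
    calc ∫ x, gammaPDFReal θ 1 x * g x = ∫ x, g x * gammaPDFReal θ 1 x := by
          simp_rw [mul_comm]
      _ = ∫ x, gammaPDFReal θ₀ 1 x := integral_congr_ae hprod
      _ = 1 := integral_gamma_pdf_one hθ₀
  have hlogg : (fun x => Real.log (g x)) =ᵐ[μ] fun x => (θ₀ - θ) * Real.log x + c := by
    filter_upwards [haepos] with x hx
    rw [hgx x hx, Real.log_mul (Real.rpow_pos_of_pos hx _).ne' (by positivity),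
      Real.log_rpow hx, Real.log_div hΓθ.ne' hΓθ₀.ne', hc]
  have hlog_int : Integrable (fun x => Real.log (g x)) μ :=
    Integrable.congr (((integrable_log_gamma hθ).const_mul (θ₀ - θ)).add
      (integrable_const c)) hlogg.symm
  have hlog_integral : ∫ x, Real.log (g x) ∂μ = (θ₀ - θ) * m + c := by
    rw [integral_congr_ae hlogg, integral_add
      ((integrable_log_gamma hθ).const_mul (θ₀ - θ)) (integrable_const c),
      integral_const_mul, integral_const]
    simp [hm, hμ]
  set h : ℝ → ℝ := fun x => g x - 1 - Real.log (g x) with hhdef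
  have hh_int : Integrable h μ := by
    have hgi1 : Integrable (fun x => g x - 1) μ := hg_int.sub (integrable_const 1)
    exact hgi1.sub hlog_int
  have hh_integral : ∫ x, h x ∂μ = (θ - θ₀) * m - c := by
    simp only [hhdef]
    have hgi1 : Integrable (fun x => g x - 1) μ := hg_int.sub (integrable_const 1)
    rw [integral_sub hgi1 hlog_int,
      integral_sub hg_int (integrable_const 1), hg_integral, hlog_integral, integral_const]
    simp
    ring
  have hh_nonneg : 0 ≤ᵐ[μ] h := by
    filter_upwards [haepos] with x hx
    have := Real.log_le_sub_one_of_pos (hgpos x hx)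
    simp only [hhdef, Pi.zero_apply]
    linarith
  rcases (integral_nonneg_of_ae hh_nonneg).lt_or_eq with hlt | heq
  · rw [← hh_integral]; exact hlt
  · exfalso
    have hzero : h =ᵐ[μ] 0 :=
      (integral_eq_zero_iff_of_nonneg_ae hh_nonneg hh_int).mp heq.symm
    have hd : θ₀ - θ ≠ 0 := sub_ne_zero.2 (fun hq => hne hq.symm)
    set x₁ : ℝ := (Real.Gamma θ₀ / Real.Gamma θ) ^ (θ₀ - θ)⁻¹ with hx₁
    have hx1 : ∀ᵐ x ∂μ, x = x₁ := by
      filter_upwards [haepos, hzero] with x hx hhx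
      simp only [hhdef, Pi.zero_apply] at hhx
      have hg1 : g x = 1 := by
        by_contra hne1
        have := Real.log_lt_sub_one_of_pos (hgpos x hx) hne1
        linarith
      rw [hgx x hx] at hg1
      have hxpow : x ^ (θ₀ - θ) = Real.Gamma θ₀ / Real.Gamma θ := by
        field_simp at hg1 ⊢
        linarith
      calc x = (x ^ (θ₀ - θ)) ^ (θ₀ - θ)⁻¹ := by
            rw [← Real.rpow_mul hx.le, mul_inv_cancel₀ hd, Real.rpow_one]
        _ = x₁ := by rw [hxpow, hx₁]
    have hsingleton : μ {x₁} = 0 := by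
      rw [hμ]
      exact (withDensity_absolutelyContinuous MeasureTheory.volume (gammaPDF θ 1))
        Real.volume_singleton
    have hcompl : μ {x | x ≠ x₁} = 0 := by
      rw [ae_iff] at hx1
      exact hx1
    have h1 : (1 : ℝ≥0∞) = μ univ := measure_univ.symm
    have h2 : μ univ ≤ μ {x₁} + μ {x | x ≠ x₁} := by
      have hss : (univ : Set ℝ) ⊆ {x₁} ∪ {x | x ≠ x₁} := by
        intro x _
        rcases eq_or_ne x x₁ with h | h
        · exact Or.inl h
        · exact Or.inr h
      exact (measure_mono hss).trans (measure_union_le _ _)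
    rw [hsingleton, hcompl] at h2
    simp [← h1] at h2

lemma avg_mul_tendsto_zero {a b : ℕ → ℝ} {L : ℝ}
    (ha : Tendsto a atTop (nhds 0))
    (hb : Tendsto (fun n => (∑ i ∈ Finset.range n, |b i|) / n) atTop (nhds L)) :
    Tendsto (fun n => (∑ i ∈ Finset.range n, a i * b i) / n) atTop (nhds 0) := by
  rw [NormedAddCommGroup.tendsto_nhds_zero]
  intro ε hε
  set ε' : ℝ := ε / (2 * (|L| + 1)) with hε'def
  have hε' : 0 < ε' := by positivity
  obtain ⟨N, hN⟩ := (Metric.tendsto_atTop.1 ha) ε' hε'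
  set C : ℝ := ∑ i ∈ Finset.range N, |a i * b i| with hC
  have hCnn : 0 ≤ C := Finset.sum_nonneg fun i _ => abs_nonneg _
  have hbound_tendsto : Tendsto (fun n : ℕ => C / n + ε' * ((∑ i ∈ Finset.range n, |b i|) / n))
      atTop (nhds (0 + ε' * L)) :=
    (tendsto_const_div_atTop_nhds_zero_nat C).add (hb.const_mul ε')
  have hlt : 0 + ε' * L < ε := by
    have h1 : ε' * L ≤ ε' * |L| := mul_le_mul_of_nonneg_left (le_abs_self L) hε'.le
    have h2 : ε' * (|L| + 1) = ε / 2 := by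
      rw [hε'def]; field_simp
    nlinarith [abs_nonneg L]
  have hev := hbound_tendsto.eventually_lt_const hlt
  filter_upwards [hev, eventually_ge_atTop N, eventually_ge_atTop 1] with n h1 h2 h3
  have hn : (0:ℝ) < n := by exact_mod_cast h3
  have key : |∑ i ∈ Finset.range n, a i * b i| ≤ C + ε' * ∑ i ∈ Finset.range n, |b i| := by
    have hsplit : ∑ i ∈ Finset.range n, a i * b i
        = (∑ i ∈ Finset.range N, a i * b i) + ∑ i ∈ Finset.Ico N n, a i * b i := by
      rw [Finset.range_eq_Ico, ← Finset.sum_Ico_consecutive _ (Nat.zero_le N) h2, Finset.range_eq_Ico]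
    rw [hsplit]
    calc |(∑ i ∈ Finset.range N, a i * b i) + ∑ i ∈ Finset.Ico N n, a i * b i|
        ≤ |∑ i ∈ Finset.range N, a i * b i| + |∑ i ∈ Finset.Ico N n, a i * b i| := abs_add_le _ _
      _ ≤ C + ε' * ∑ i ∈ Finset.range n, |b i| := by
          gcongr
          · rw [hC]
            exact Finset.abs_sum_le_sum_abs _ _
          · calc |∑ i ∈ Finset.Ico N n, a i * b i| ≤ ∑ i ∈ Finset.Ico N n, |a i * b i| :=
                Finset.abs_sum_le_sum_abs _ _
              _ ≤ ∑ i ∈ Finset.Ico N n, ε' * |b i| := by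
                  apply Finset.sum_le_sum
                  intro i hi
                  rw [abs_mul]
                  apply mul_le_mul_of_nonneg_right _ (abs_nonneg _)
                  have := hN i (Finset.mem_Ico.1 hi).1
                  rw [Real.dist_eq, sub_zero] at this
                  exact this.le
              _ = ε' * ∑ i ∈ Finset.Ico N n, |b i| := by rw [Finset.mul_sum]
              _ ≤ ε' * ∑ i ∈ Finset.range n, |b i| := by
                  apply mul_le_mul_of_nonneg_left _ hε'.le
                  rw [Finset.range_eq_Ico]
                  apply Finset.sum_le_sum_of_subset_of_nonneg
                  · exact Finset.Ico_subset_Ico (Nat.zero_le N) le_rfl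
                  · intro i _ _; exact abs_nonneg _
  calc ‖(∑ i ∈ Finset.range n, a i * b i) / n‖
      = |∑ i ∈ Finset.range n, a i * b i| / n := by
        rw [Real.norm_eq_abs, abs_div, abs_of_pos hn]
    _ ≤ (C + ε' * ∑ i ∈ Finset.range n, |b i|) / n := by
        gcongr
    _ = C / n + ε' * ((∑ i ∈ Finset.range n, |b i|) / n) := by ring
    _ < ε := h1

lemma sum_Icc_shift (f : ℕ → ℝ) (n : ℕ) :
    ∑ i ∈ Finset.Icc 1 n, f i = ∑ i ∈ Finset.range n, f (i+1) := by
  rw [show Finset.Icc 1 n = Finset.Ico 1 (n+1) by rw [Finset.Ico_add_one_right_eq_Icc],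
    Finset.sum_Ico_eq_sum_range]
  simp [add_comm]

lemma log_gam_ratio {a b x : ℝ} (ha : 0 < a) (hb : 0 < b) (hx : 0 < x) :
    Real.log (gammaPDFReal a 1 x / gammaPDFReal b 1 x)
      = (a - b) * Real.log x + (Real.log (Real.Gamma b) - Real.log (Real.Gamma a)) := by
  have hΓa := Real.Gamma_pos_of_pos ha
  have hΓb := Real.Gamma_pos_of_pos hb
  have hxa := Real.rpow_pos_of_pos hx (a-1)
  have hxb := Real.rpow_pos_of_pos hx (b-1)
  have hea := Real.exp_pos (-x)
  have hlg : ∀ aa : ℝ, 0 < aa → Real.log ((Real.Gamma aa)⁻¹ * (Real.exp (-x) * x^(aa-1)))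
      = -(Real.log (Real.Gamma aa)) + (-x + (aa-1) * Real.log x) := by
    intro aa haa
    have hΓ := Real.Gamma_pos_of_pos haa
    rw [Real.log_mul (by positivity) (by positivity),
      Real.log_mul (by positivity) (by positivity),
      Real.log_inv, Real.log_exp, Real.log_rpow hx]
  rw [pdf_eq_Ioi x hx, pdf_eq_Ioi x hx, Real.log_div (by positivity) (by positivity),
    hlg a ha, hlg b hb]
  ring

end RS

end

open MeasureTheory ProbabilityTheory Filter

noncomputable section

/-- The Gamma(θ,1) density. -/
def gam (θ x : ℝ) : ℝ := gammaPDFReal θ 1 x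

/-- The Robbins–Siegmund test for the Gamma shape parameter has power one:
for every `θ > 0` with `θ ≠ θ₀`, if `X₁, X₂, …` are i.i.d. Gamma(θ,1), then `Λ_n → ∞`
almost surely, and `P_θ(τ_b < ∞) = 1` for every `b > 0`. -/
theorem gamma_power_one
    {Ω : Type*} [MeasurableSpace Ω] (P : Measure Ω) [IsProbabilityMeasure P]
    (θ₀ θ : ℝ) (hθ₀ : 0 < θ₀) (hθ : 0 < θ) (hne : θ ≠ θ₀)
    (X : ℕ → Ω → ℝ) (hXmeas : ∀ i, Measurable (X i))
    (hindep : iIndepFun X P)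
    (hlaw : ∀ i, 1 ≤ i → Measure.map (X i) P = gammaMeasure θ 1)
    (s t : ℝ) (hs : 0 ≤ s) (ht : 0 ≤ t)
    (θe : ℕ → Ω → ℝ)
    (hθ1 : ∀ ω, θe 1 ω = if s = 0 ∨ t = 0 then θ₀ else s / t)
    (hθrec : ∀ n ω, 1 ≤ n →
      θe (n + 1) ω = ((∑ i ∈ Finset.Icc 1 n, X i ω) + s) / ((n : ℝ) + t))
    (Λ : ℕ → Ω → ℝ)
    (hΛ : ∀ n ω, Λ n ω = ∏ i ∈ Finset.Icc 1 n, gam (θe i ω) (X i ω) / gam θ₀ (X i ω)) :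
    (∀ᵐ ω ∂P, Filter.Tendsto (fun n => Λ n ω) Filter.atTop Filter.atTop) ∧
      ∀ b : ℝ, 0 < b → P {ω | ∃ n, 1 ≤ n ∧ Real.exp b ≤ Λ n ω} = 1 := by
  have hKpos := RS.K_pos hθ hθ₀ hne
  -- generic SLLN transfer
  have htrans : ∀ (φ : ℝ → ℝ), Measurable φ → Integrable φ (gammaMeasure θ 1) →
      ∀ᵐ ω ∂P, Filter.Tendsto (fun n : ℕ => (∑ i ∈ Finset.range n, φ (X (i+1) ω)) / n)
        Filter.atTop (nhds (∫ x, φ x ∂(gammaMeasure θ 1))) := by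
    intro φ hφm hφint
    have hint : Integrable (fun ω => φ (X (0+1) ω)) P := by
      have h1 : Integrable φ (Measure.map (X 1) P) := by
        rw [hlaw 1 le_rfl]; exact hφint
      have := (integrable_map_measure hφm.aestronglyMeasurable
        (hXmeas 1).aemeasurable).mp h1
      exact this
    have hp : Pairwise (Function.onFun (IndepFun · · P) fun i => fun ω => φ (X (i+1) ω)) := by
      intro i j hij
      exact (hindep.indepFun (show i+1 ≠ j+1 by omega)).comp hφm hφm
    have hid : ∀ i, IdentDistrib (fun ω => φ (X (i+1) ω)) (fun ω => φ (X (0+1) ω)) P P := by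
      intro i
      have hbase : IdentDistrib (X (i+1)) (X (0+1)) P P :=
        ⟨(hXmeas _).aemeasurable, (hXmeas _).aemeasurable, by
          rw [hlaw (i+1) (by omega), hlaw (0+1) (by omega)]⟩
      exact hbase.comp hφm
    have hslln := strong_law_ae_real _ hint hp hid
    have hmean : (∫ ω, φ (X (0+1) ω) ∂P) = ∫ x, φ x ∂(gammaMeasure θ 1) := by
      rw [← hlaw 1 le_rfl, integral_map (hXmeas 1).aemeasurable hφm.aestronglyMeasurable]
    rw [hmean] at hslln
    exact hslln
  have slln1 := htrans (fun x => x) measurable_id' (RS.integrable_id_gamma hθ)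
  rw [RS.integral_id_gamma hθ] at slln1
  have slln2 := htrans Real.log Real.measurable_log (RS.integrable_log_gamma hθ)
  have slln3 := htrans (fun x => |Real.log x|) Real.measurable_log.abs
    (RS.integrable_abs_log_gamma hθ)
  -- a.s. positivity of the X i, i ≥ 1
  have hposae : ∀ᵐ ω ∂P, ∀ i : ℕ, 1 ≤ i → 0 < X i ω := by
    rw [ae_all_iff]
    intro i
    rcases Nat.eq_zero_or_pos i with h0 | h1
    · exact Filter.Eventually.of_forall fun ω h => absurd h (by omega)
    · rw [ae_iff]
      have hsub : {ω | ¬ (1 ≤ i → 0 < X i ω)} ⊆ X i ⁻¹' (Set.Iic 0) := by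
        intro ω hω
        simp only [Set.mem_setOf_eq] at hω
        push_neg at hω
        exact hω.2
      have hnull : P (X i ⁻¹' (Set.Iic 0)) = 0 := by
        have hmap : Measure.map (X i) P (Set.Iic 0) = P (X i ⁻¹' (Set.Iic 0)) :=
          Measure.map_apply (hXmeas i) measurableSet_Iic
        rw [hlaw i h1] at hmap
        rw [← hmap]
        exact RS.gammaMeasure_Iic_zero
      exact measure_mono_null hsub hnull
  have main : ∀ᵐ ω ∂P, Filter.Tendsto (fun n => Λ n ω) Filter.atTop Filter.atTop := by
    filter_upwards [slln1, slln2, slln3, hposae] with ω h1 h2 h3 hpos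
    have hθe1pos : 0 < θe 1 ω := by
      rw [hθ1 ω]
      split_ifs with hif
      · exact hθ₀
      · push_neg at hif
        exact div_pos (lt_of_le_of_ne hs (Ne.symm hif.1)) (lt_of_le_of_ne ht (Ne.symm hif.2))
    have hθepos : ∀ i : ℕ, 1 ≤ i → 0 < θe i ω := by
      intro i hi
      match i, hi with
      | 1, _ => exact hθe1pos
      | (n+2), _ =>
        rw [hθrec (n+1) ω (by omega)]
        apply div_pos
        · have hsum : 0 < ∑ j ∈ Finset.Icc 1 (n+1), X j ω := by
            apply Finset.sum_pos
            · intro j hj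
              exact hpos j (Finset.mem_Icc.1 hj).1
            · exact ⟨1, Finset.mem_Icc.2 ⟨le_rfl, by omega⟩⟩
          linarith
        · have hn1 : (0:ℝ) ≤ (n:ℝ) := Nat.cast_nonneg n
          push_cast
          linarith
    have hθet : Filter.Tendsto (fun i => θe i ω) Filter.atTop (nhds θ) := by
      apply (tendsto_add_atTop_iff_nat 1).mp
      have heq : ∀ᶠ n : ℕ in Filter.atTop,
          ((∑ i ∈ Finset.range n, X (i+1) ω)/n + s/n) / (1 + t/n) = θe (n+1) ω := by
        filter_upwards [eventually_ge_atTop 1] with n hn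
        have hn1 : (1:ℝ) ≤ (n:ℝ) := by exact_mod_cast hn
        have hn0 : (n:ℝ) ≠ 0 := by linarith
        have hnt : (n:ℝ) + t ≠ 0 := by linarith
        rw [hθrec n ω hn, RS.sum_Icc_shift (fun i => X i ω) n]
        field_simp
      apply Filter.Tendsto.congr' heq
      have hd : Filter.Tendsto (fun n : ℕ => 1 + t/(n:ℝ)) Filter.atTop (nhds (1+0)) :=
        tendsto_const_nhds.add (tendsto_const_div_atTop_nhds_zero_nat t)
      have hnum : Filter.Tendsto (fun n : ℕ => (∑ i ∈ Finset.range n, X (i+1) ω)/(n:ℝ) + s/n)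
          Filter.atTop (nhds (θ + 0)) :=
        h1.add (tendsto_const_div_atTop_nhds_zero_nat s)
      have hdiv := hnum.div hd (by norm_num)
      simp only [add_zero, div_one] at hdiv
      exact hdiv
    set ℓ : ℕ → ℝ := fun i => (θe (i+1) ω - θ₀) * Real.log (X (i+1) ω)
      + (Real.log (Real.Gamma θ₀) - Real.log (Real.Gamma (θe (i+1) ω))) with hℓ
    have hΛlog : ∀ n, 0 < Λ n ω ∧ Real.log (Λ n ω) = ∑ i ∈ Finset.range n, ℓ i := by
      intro n
      have hfac : ∀ i ∈ Finset.Icc 1 n, 0 < gam (θe i ω) (X i ω) / gam θ₀ (X i ω) := by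
        intro i hi
        have hi1 := (Finset.mem_Icc.1 hi).1
        exact div_pos (gammaPDFReal_pos (hθepos i hi1) one_pos (hpos i hi1))
          (gammaPDFReal_pos hθ₀ one_pos (hpos i hi1))
      refine ⟨by rw [hΛ]; exact Finset.prod_pos hfac, ?_⟩
      rw [hΛ, Real.log_prod (fun i hi => (hfac i hi).ne'),
        RS.sum_Icc_shift (fun i => Real.log (gam (θe i ω) (X i ω) / gam θ₀ (X i ω))) n]
      apply Finset.sum_congr rfl
      intro i _
      exact RS.log_gam_ratio (hθepos (i+1) (by omega)) hθ₀ (hpos (i+1) (by omega))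
    have havg : Filter.Tendsto (fun n : ℕ => (∑ i ∈ Finset.range n, ℓ i) / n) Filter.atTop
        (nhds ((θ - θ₀) * (∫ x, Real.log x ∂(gammaMeasure θ 1))
          - (Real.log (Real.Gamma θ) - Real.log (Real.Gamma θ₀)))) := by
      have hθet' : Filter.Tendsto (fun i : ℕ => θe (i+1) ω) Filter.atTop (nhds θ) := by
        have := hθet.comp (tendsto_add_atTop_nat 1)
        simpa [Function.comp_def] using this
      have hT1 : Filter.Tendsto
          (fun n : ℕ => (∑ i ∈ Finset.range n, (θ - θ₀) * Real.log (X (i+1) ω))/(n:ℝ))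
          Filter.atTop (nhds ((θ-θ₀) * (∫ x, Real.log x ∂(gammaMeasure θ 1)))) := by
        have := h2.const_mul (θ-θ₀)
        simp_rw [← Finset.mul_sum, mul_div_assoc]
        exact this
      have hT2 : Filter.Tendsto
          (fun n : ℕ => (∑ i ∈ Finset.range n, (θe (i+1) ω - θ) * Real.log (X (i+1) ω))/(n:ℝ))
          Filter.atTop (nhds 0) := by
        apply RS.avg_mul_tendsto_zero (L := ∫ x, |Real.log x| ∂(gammaMeasure θ 1))
        · have := hθet'.sub_const θ
          simpa using this
        · exact h3
      have hT3 : Filter.Tendsto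
          (fun n : ℕ => (∑ i ∈ Finset.range n,
            (Real.log (Real.Gamma θ₀) - Real.log (Real.Gamma (θe (i+1) ω))))/(n:ℝ))
          Filter.atTop (nhds (Real.log (Real.Gamma θ₀) - Real.log (Real.Gamma θ))) := by
        have hcont : ContinuousAt (fun aa : ℝ =>
            Real.log (Real.Gamma θ₀) - Real.log (Real.Gamma aa)) θ := by
          apply ContinuousAt.sub continuousAt_const
          have hd : DifferentiableAt ℝ Real.Gamma θ := by
            apply Real.differentiableAt_Gamma
            intro mm hcontra
            have h0 : (0:ℝ) ≤ (mm:ℝ) := Nat.cast_nonneg mm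
            rw [hcontra] at hθ
            simp only [neg_pos] at hθ
            linarith
          exact hd.continuousAt.log (Real.Gamma_pos_of_pos hθ).ne'
        have hu := (hcont.tendsto.comp hθet').cesaro
        apply Filter.Tendsto.congr _ hu
        intro n
        rw [div_eq_inv_mul]
        rfl
      have hcomb := (hT1.add hT2).add hT3
      have hdecomp : (fun n : ℕ => (∑ i ∈ Finset.range n, ℓ i) / (n:ℝ))
          = fun n : ℕ =>
            (∑ i ∈ Finset.range n, (θ - θ₀) * Real.log (X (i+1) ω))/(n:ℝ)
            + (∑ i ∈ Finset.range n, (θe (i+1) ω - θ) * Real.log (X (i+1) ω))/(n:ℝ)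
            + (∑ i ∈ Finset.range n,
                (Real.log (Real.Gamma θ₀) - Real.log (Real.Gamma (θe (i+1) ω))))/(n:ℝ) := by
        funext n
        rw [← add_div, ← add_div, ← Finset.sum_add_distrib, ← Finset.sum_add_distrib]
        congr 1
        apply Finset.sum_congr rfl
        intro i _
        rw [hℓ]
        ring
      rw [hdecomp]
      convert hcomb using 2
      ring
    have hsumtend : Filter.Tendsto (fun n : ℕ => ∑ i ∈ Finset.range n, ℓ i)
        Filter.atTop Filter.atTop := by
      have heq : ∀ᶠ n : ℕ in Filter.atTop,
          (n:ℝ) * ((∑ i ∈ Finset.range n, ℓ i)/(n:ℝ)) = ∑ i ∈ Finset.range n, ℓ i := by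
        filter_upwards [eventually_ge_atTop 1] with n hn
        have hn1 : (1:ℝ) ≤ (n:ℝ) := by exact_mod_cast hn
        field_simp
      exact Filter.Tendsto.congr' heq
        (Filter.Tendsto.atTop_mul_pos hKpos tendsto_natCast_atTop_atTop havg)
    have hΛeq : (fun n => Λ n ω) = fun n => Real.exp (∑ i ∈ Finset.range n, ℓ i) := by
      funext n
      rw [← (hΛlog n).2, Real.exp_log (hΛlog n).1]
    rw [hΛeq]
    exact Real.tendsto_exp_atTop.comp hsumtend
  refine ⟨main, ?_⟩
  intro b hb
  have hae : ∀ᵐ ω ∂P, ω ∈ {ω | ∃ n, 1 ≤ n ∧ Real.exp b ≤ Λ n ω} := by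
    filter_upwards [main] with ω hω
    have hev := (hω.eventually_ge_atTop (Real.exp b)).and (eventually_ge_atTop 1)
    obtain ⟨n, hn⟩ := hev.exists
    exact ⟨n, hn.2, hn.1⟩
  have hcongr : {ω | ∃ n, 1 ≤ n ∧ Real.exp b ≤ Λ n ω} =ᵐ[P] (Set.univ : Set Ω) := by
    rw [Filter.eventuallyEq_set]
    filter_upwards [hae] with ω h
    simp [h]
  rw [measure_congr hcongr, measure_univ]
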